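/- Let h > 0, ε ∈ ℝ, α, β ∈ ℝ with α² + β² = 1, and let v : ℝ² → ℝ. Let A be the rotation matrix with rows (α, β) and (−β, α), and define S : ℝ² → ℝ by S(y) = ½( −αβ y₁² + αβ y₂² + 2β² y₁ y₂ ). For a smooth f : ℝ² → ℂ define (Ĥf)(x) = ½(−ih∂₁+x₂)²f(x) + ½(−ih∂₂)²f(x) + εv(x)f(x), and set w(y) = v(A⁻¹y) and g(y) = e^{−iS(y)/h} f(A⁻¹y). Then for all y ∈ ℝ²: ½(−ih∂₁+y₂)²g(y) + ½(−ih∂₂)²g(y) + εw(y)g(y) = e^{−iS(y)/h} · (Ĥf)(A⁻¹y). -/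

import Mathlib

open Real

noncomputable section

/-- Partial derivative in the first variable of a function on `ℝ × ℝ`. -/
def pd1 (f : ℝ × ℝ → ℂ) (x : ℝ × ℝ) : ℂ := deriv (fun t => f (t, x.2)) x.1

/-- Partial derivative in the second variable of a function on `ℝ × ℝ`. -/
def pd2 (f : ℝ × ℝ → ℂ) (x : ℝ × ℝ) : ℂ := deriv (fun t => f (x.1, t)) x.2

/-- The magnetic Schrödinger operator `Ĥ = ½(−ih∂₁+x₂)² + ½(−ih∂₂)² + εv`. -/
def Hop (h ε : ℝ) (v : ℝ × ℝ → ℝ) (f : ℝ × ℝ → ℂ) : ℝ × ℝ → ℂ := fun x =>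
  (1 / 2 : ℂ) * (-(h : ℂ) ^ 2 * pd1 (pd1 f) x
      - 2 * Complex.I * (h : ℂ) * (x.2 : ℂ) * pd1 f x + (x.2 : ℂ) ^ 2 * f x)
    + (1 / 2 : ℂ) * (-(h : ℂ) ^ 2 * pd2 (pd2 f) x)
    + ((ε * v x : ℝ) : ℂ) * f x

/-- Directional derivative of a composition with a curve in the plane. -/
lemma lineDgen (φ : ℝ × ℝ → ℂ) (hφ : Differentiable ℝ φ) (c : ℝ → ℝ × ℝ) (p q t0 : ℝ)
    (hc : HasDerivAt c (p, q) t0) :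
    HasDerivAt (fun t => φ (c t))
      ((p : ℂ) * fderiv ℝ φ (c t0) ((1:ℝ), (0:ℝ))
        + (q : ℂ) * fderiv ℝ φ (c t0) ((0:ℝ), (1:ℝ))) t0 := by
  have h1 := (hφ (c t0)).hasFDerivAt.comp_hasDerivAt t0 hc
  refine h1.congr_deriv ?_
  have hpq : ((p, q) : ℝ × ℝ) = p • ((1:ℝ), (0:ℝ)) + q • ((0:ℝ), (1:ℝ)) := by simp
  rw [hpq, map_add, map_smul, map_smul]
  simp [Complex.real_smul]

/-- Derivative of a quadratic polynomial. -/
lemma quadDeriv (A B C t0 : ℝ) :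
    HasDerivAt (fun t : ℝ => A * t ^ 2 + B * t + C) (2 * A * t0 + B) t0 := by
  have h1 : HasDerivAt (fun t : ℝ => t ^ 2) (2 * t0) t0 := by
    simpa using hasDerivAt_pow 2 t0
  have h2 : HasDerivAt (fun t : ℝ => A * t ^ 2) (A * (2 * t0)) t0 := h1.const_mul A
  have h3 : HasDerivAt (fun t : ℝ => B * t) B t0 := by
    simpa using (hasDerivAt_id t0).const_mul B
  have := (h2.add h3).add_const C
  exact this.congr_deriv (by ring)

lemma pd1_fderiv (φ : ℝ × ℝ → ℂ) (hφ : Differentiable ℝ φ) (x : ℝ × ℝ) :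
    pd1 φ x = fderiv ℝ φ x ((1:ℝ), (0:ℝ)) := by
  have hc : HasDerivAt (fun t : ℝ => ((t, x.2) : ℝ × ℝ)) ((1:ℝ), (0:ℝ)) x.1 :=
    (hasDerivAt_id x.1).prodMk (hasDerivAt_const x.1 x.2)
  have := (lineDgen φ hφ (fun t => (t, x.2)) 1 0 x.1 hc).deriv
  simpa [pd1] using this

lemma pd2_fderiv (φ : ℝ × ℝ → ℂ) (hφ : Differentiable ℝ φ) (x : ℝ × ℝ) :
    pd2 φ x = fderiv ℝ φ x ((0:ℝ), (1:ℝ)) := by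
  have hc : HasDerivAt (fun t : ℝ => ((x.1, t) : ℝ × ℝ)) ((0:ℝ), (1:ℝ)) x.2 :=
    (hasDerivAt_const x.2 x.1).prodMk (hasDerivAt_id x.2)
  have := (lineDgen φ hφ (fun t => (x.1, t)) 0 1 x.2 hc).deriv
  simpa [pd2] using this

lemma contDiff_fderiv_apply (f : ℝ × ℝ → ℂ) (hf : ContDiff ℝ (⊤ : ℕ∞) f) (v : ℝ × ℝ) :
    ContDiff ℝ (⊤ : ℕ∞) (fun x => fderiv ℝ f x v) := by
  have h1 : ContDiff ℝ (⊤ : ℕ∞) (fderiv ℝ f) := hf.fderiv_right (by exact_mod_cast le_top)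
  exact (ContinuousLinearMap.apply ℝ ℂ v).contDiff.comp h1

theorem stmt_16 (h : ℝ) (hh : 0 < h) (ε α β : ℝ) (hαβ : α ^ 2 + β ^ 2 = 1)
    (v : ℝ × ℝ → ℝ) (f : ℝ × ℝ → ℂ) (hf : ContDiff ℝ (⊤ : ℕ∞) f)
    (S : ℝ × ℝ → ℝ)
    (hS : ∀ y : ℝ × ℝ, S y = (1 / 2) * (-(α * β) * y.1 ^ 2 + α * β * y.2 ^ 2
      + 2 * β ^ 2 * y.1 * y.2))
    (Ainv : ℝ × ℝ → ℝ × ℝ)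
    (hAinv : ∀ y : ℝ × ℝ, Ainv y = (α * y.1 - β * y.2, β * y.1 + α * y.2))
    (w : ℝ × ℝ → ℝ) (hw : ∀ y, w y = v (Ainv y))
    (g : ℝ × ℝ → ℂ)
    (hg : ∀ y : ℝ × ℝ, g y =
      Complex.exp (-Complex.I * ((S y : ℝ) : ℂ) / (h : ℂ)) * f (Ainv y)) :
    ∀ y : ℝ × ℝ,
      (1 / 2 : ℂ) * (-(h : ℂ) ^ 2 * pd1 (pd1 g) y
          - 2 * Complex.I * (h : ℂ) * (y.2 : ℂ) * pd1 g y + (y.2 : ℂ) ^ 2 * g y)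
        + (1 / 2 : ℂ) * (-(h : ℂ) ^ 2 * pd2 (pd2 g) y)
        + ((ε * w y : ℝ) : ℂ) * g y
      = Complex.exp (-Complex.I * ((S y : ℝ) : ℂ) / (h : ℂ)) * Hop h ε v f (Ainv y) := by
  have hne : (h : ℂ) ≠ 0 := by exact_mod_cast ne_of_gt hh
  have hfd : Differentiable ℝ f := hf.differentiable (by simp)
  have hF1d : Differentiable ℝ (fun z => fderiv ℝ f z ((1:ℝ), (0:ℝ))) :=
    (contDiff_fderiv_apply f hf _).differentiable (by simp)
  have hF2d : Differentiable ℝ (fun z => fderiv ℝ f z ((0:ℝ), (1:ℝ))) :=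
    (contDiff_fderiv_apply f hf _).differentiable (by simp)
  -- curve derivatives
  have hcurve1 : ∀ y1 y2 : ℝ,
      HasDerivAt (fun t : ℝ => ((α * t - β * y2, β * t + α * y2) : ℝ × ℝ)) (α, β) y1 := by
    intro y1 y2
    have h1 : HasDerivAt (fun t : ℝ => α * t - β * y2) α y1 := by
      rw [show (fun t : ℝ => α * t - β * y2)
          = fun t : ℝ => 0 * t ^ 2 + α * t + (-(β * y2)) from funext fun t => by ring]
      have := quadDeriv 0 α (-(β * y2)) y1
      convert this using 1; ring
    have h2 : HasDerivAt (fun t : ℝ => β * t + α * y2) β y1 := by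
      rw [show (fun t : ℝ => β * t + α * y2)
          = fun t : ℝ => 0 * t ^ 2 + β * t + α * y2 from funext fun t => by ring]
      have := quadDeriv 0 β (α * y2) y1
      convert this using 1; ring
    exact h1.prodMk h2
  have hcurve2 : ∀ y1 y2 : ℝ,
      HasDerivAt (fun t : ℝ => ((α * y1 - β * t, β * y1 + α * t) : ℝ × ℝ)) (-β, α) y2 := by
    intro y1 y2
    have h1 : HasDerivAt (fun t : ℝ => α * y1 - β * t) (-β) y2 := by
      rw [show (fun t : ℝ => α * y1 - β * t)
          = fun t : ℝ => 0 * t ^ 2 + (-β) * t + α * y1 from funext fun t => by ring]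
      have := quadDeriv 0 (-β) (α * y1) y2
      convert this using 1; ring
    have h2 : HasDerivAt (fun t : ℝ => β * y1 + α * t) α y2 := by
      rw [show (fun t : ℝ => β * y1 + α * t)
          = fun t : ℝ => 0 * t ^ 2 + α * t + β * y1 from funext fun t => by ring]
      have := quadDeriv 0 α (β * y1) y2
      convert this using 1; ring
    exact h1.prodMk h2
  -- phase derivatives
  have hphase1 : ∀ y1 y2 : ℝ,
      HasDerivAt (fun t => Complex.exp (-Complex.I * ((S (t, y2) : ℝ) : ℂ) / (h : ℂ)))
        (Complex.exp (-Complex.I * ((S (y1, y2) : ℝ) : ℂ) / (h : ℂ))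
          * (-Complex.I * ((-(α * β) * y1 + β ^ 2 * y2 : ℝ) : ℂ) / (h : ℂ))) y1 := by
    intro y1 y2
    have hs : HasDerivAt (fun t : ℝ => S (t, y2)) (-(α * β) * y1 + β ^ 2 * y2) y1 := by
      rw [show (fun t : ℝ => S (t, y2))
          = fun t : ℝ => (-(α * β) / 2) * t ^ 2 + (β ^ 2 * y2) * t + (1 / 2) * (α * β * y2 ^ 2)
          from funext fun t => by simp only [hS]; ring]
      have := quadDeriv (-(α * β) / 2) (β ^ 2 * y2) ((1 / 2) * (α * β * y2 ^ 2)) y1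
      convert this using 1; ring
    exact ((hs.ofReal_comp.const_mul (-Complex.I)).div_const (h : ℂ)).cexp
  have hphase2 : ∀ y1 y2 : ℝ,
      HasDerivAt (fun t => Complex.exp (-Complex.I * ((S (y1, t) : ℝ) : ℂ) / (h : ℂ)))
        (Complex.exp (-Complex.I * ((S (y1, y2) : ℝ) : ℂ) / (h : ℂ))
          * (-Complex.I * ((α * β * y2 + β ^ 2 * y1 : ℝ) : ℂ) / (h : ℂ))) y2 := by
    intro y1 y2
    have hs : HasDerivAt (fun t : ℝ => S (y1, t)) (α * β * y2 + β ^ 2 * y1) y2 := by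
      rw [show (fun t : ℝ => S (y1, t))
          = fun t : ℝ => (α * β / 2) * t ^ 2 + (β ^ 2 * y1) * t + (1 / 2) * (-(α * β) * y1 ^ 2)
          from funext fun t => by simp only [hS]; ring]
      have := quadDeriv (α * β / 2) (β ^ 2 * y1) ((1 / 2) * (-(α * β) * y1 ^ 2)) y2
      convert this using 1; ring
    exact ((hs.ofReal_comp.const_mul (-Complex.I)).div_const (h : ℂ)).cexp
  -- first derivatives of g
  have G1 : ∀ y1 y2 : ℝ, pd1 g (y1, y2) =
      Complex.exp (-Complex.I * ((S (y1, y2) : ℝ) : ℂ) / (h : ℂ))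
          * (-Complex.I * ((-(α * β) * y1 + β ^ 2 * y2 : ℝ) : ℂ) / (h : ℂ))
          * f (α * y1 - β * y2, β * y1 + α * y2)
        + Complex.exp (-Complex.I * ((S (y1, y2) : ℝ) : ℂ) / (h : ℂ))
          * ((α : ℂ) * fderiv ℝ f (α * y1 - β * y2, β * y1 + α * y2) ((1:ℝ), (0:ℝ))
            + (β : ℂ) * fderiv ℝ f (α * y1 - β * y2, β * y1 + α * y2) ((0:ℝ), (1:ℝ))) := by
    intro y1 y2
    have hfun : (fun t => g (t, y2)) = fun t =>
        Complex.exp (-Complex.I * ((S (t, y2) : ℝ) : ℂ) / (h : ℂ))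
          * f (α * t - β * y2, β * t + α * y2) := by
      funext t; simp only [hg, hAinv]
    have hD := (hphase1 y1 y2).mul
      (lineDgen f hfd (fun t => (α * t - β * y2, β * t + α * y2)) α β y1 (hcurve1 y1 y2))
    change deriv (fun t => g (t, y2)) y1 = _
    rw [hfun]
    exact hD.deriv
  have G2 : ∀ y1 y2 : ℝ, pd2 g (y1, y2) =
      Complex.exp (-Complex.I * ((S (y1, y2) : ℝ) : ℂ) / (h : ℂ))
          * (-Complex.I * ((α * β * y2 + β ^ 2 * y1 : ℝ) : ℂ) / (h : ℂ))
          * f (α * y1 - β * y2, β * y1 + α * y2)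
        + Complex.exp (-Complex.I * ((S (y1, y2) : ℝ) : ℂ) / (h : ℂ))
          * (((-β : ℝ) : ℂ) * fderiv ℝ f (α * y1 - β * y2, β * y1 + α * y2) ((1:ℝ), (0:ℝ))
            + (α : ℂ) * fderiv ℝ f (α * y1 - β * y2, β * y1 + α * y2) ((0:ℝ), (1:ℝ))) := by
    intro y1 y2
    have hfun : (fun t => g (y1, t)) = fun t =>
        Complex.exp (-Complex.I * ((S (y1, t) : ℝ) : ℂ) / (h : ℂ))
          * f (α * y1 - β * t, β * y1 + α * t) := by
      funext t; simp only [hg, hAinv]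
    have hD := (hphase2 y1 y2).mul
      (lineDgen f hfd (fun t => (α * y1 - β * t, β * y1 + α * t)) (-β) α y2 (hcurve2 y1 y2))
    change deriv (fun t => g (y1, t)) y2 = _
    rw [hfun]
    exact hD.deriv
  -- second derivatives of g
  have G11 : ∀ y1 y2 : ℝ, pd1 (pd1 g) (y1, y2) =
      (Complex.exp (-Complex.I * ((S (y1, y2) : ℝ) : ℂ) / (h : ℂ))
          * (-Complex.I * ((-(α * β) * y1 + β ^ 2 * y2 : ℝ) : ℂ) / (h : ℂ))
          * (-Complex.I * ((-(α * β) * y1 + β ^ 2 * y2 : ℝ) : ℂ) / (h : ℂ))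
        + Complex.exp (-Complex.I * ((S (y1, y2) : ℝ) : ℂ) / (h : ℂ))
          * (-Complex.I * ((-(α * β) : ℝ) : ℂ) / (h : ℂ)))
        * f (α * y1 - β * y2, β * y1 + α * y2)
      + Complex.exp (-Complex.I * ((S (y1, y2) : ℝ) : ℂ) / (h : ℂ))
          * (-Complex.I * ((-(α * β) * y1 + β ^ 2 * y2 : ℝ) : ℂ) / (h : ℂ))
          * ((α : ℂ) * fderiv ℝ f (α * y1 - β * y2, β * y1 + α * y2) ((1:ℝ), (0:ℝ))
            + (β : ℂ) * fderiv ℝ f (α * y1 - β * y2, β * y1 + α * y2) ((0:ℝ), (1:ℝ)))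
      + (Complex.exp (-Complex.I * ((S (y1, y2) : ℝ) : ℂ) / (h : ℂ))
          * (-Complex.I * ((-(α * β) * y1 + β ^ 2 * y2 : ℝ) : ℂ) / (h : ℂ))
          * ((α : ℂ) * fderiv ℝ f (α * y1 - β * y2, β * y1 + α * y2) ((1:ℝ), (0:ℝ))
            + (β : ℂ) * fderiv ℝ f (α * y1 - β * y2, β * y1 + α * y2) ((0:ℝ), (1:ℝ)))
        + Complex.exp (-Complex.I * ((S (y1, y2) : ℝ) : ℂ) / (h : ℂ))
          * ((α : ℂ) * ((α : ℂ) * fderiv ℝ (fun z => fderiv ℝ f z ((1:ℝ), (0:ℝ)))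
                (α * y1 - β * y2, β * y1 + α * y2) ((1:ℝ), (0:ℝ))
              + (β : ℂ) * fderiv ℝ (fun z => fderiv ℝ f z ((1:ℝ), (0:ℝ)))
                (α * y1 - β * y2, β * y1 + α * y2) ((0:ℝ), (1:ℝ)))
            + (β : ℂ) * ((α : ℂ) * fderiv ℝ (fun z => fderiv ℝ f z ((0:ℝ), (1:ℝ)))
                (α * y1 - β * y2, β * y1 + α * y2) ((1:ℝ), (0:ℝ))
              + (β : ℂ) * fderiv ℝ (fun z => fderiv ℝ f z ((0:ℝ), (1:ℝ)))
                (α * y1 - β * y2, β * y1 + α * y2) ((0:ℝ), (1:ℝ))))) := by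
    intro y1 y2
    have hfun : (fun t => pd1 g (t, y2)) = fun t =>
        Complex.exp (-Complex.I * ((S (t, y2) : ℝ) : ℂ) / (h : ℂ))
          * (-Complex.I * ((-(α * β) * t + β ^ 2 * y2 : ℝ) : ℂ) / (h : ℂ))
          * f (α * t - β * y2, β * t + α * y2)
        + Complex.exp (-Complex.I * ((S (t, y2) : ℝ) : ℂ) / (h : ℂ))
          * ((α : ℂ) * fderiv ℝ f (α * t - β * y2, β * t + α * y2) ((1:ℝ), (0:ℝ))
            + (β : ℂ) * fderiv ℝ f (α * t - β * y2, β * t + α * y2) ((0:ℝ), (1:ℝ))) :=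
      funext fun t => G1 t y2
    have hC1t : HasDerivAt
        (fun t => -Complex.I * ((-(α * β) * t + β ^ 2 * y2 : ℝ) : ℂ) / (h : ℂ))
        (-Complex.I * ((-(α * β) : ℝ) : ℂ) / (h : ℂ)) y1 := by
      have hlin : HasDerivAt (fun t : ℝ => -(α * β) * t + β ^ 2 * y2) (-(α * β)) y1 := by
        rw [show (fun t : ℝ => -(α * β) * t + β ^ 2 * y2)
            = fun t : ℝ => 0 * t ^ 2 + (-(α * β)) * t + β ^ 2 * y2
            from funext fun t => by ring]
        have := quadDeriv 0 (-(α * β)) (β ^ 2 * y2) y1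
        convert this using 1; ring
      exact (hlin.ofReal_comp.const_mul (-Complex.I)).div_const (h : ℂ)
    have hD := (((hphase1 y1 y2).mul hC1t).mul
        (lineDgen f hfd (fun t => (α * t - β * y2, β * t + α * y2)) α β y1 (hcurve1 y1 y2))).add
      ((hphase1 y1 y2).mul
        (((lineDgen (fun z => fderiv ℝ f z ((1:ℝ), (0:ℝ))) hF1d
            (fun t => (α * t - β * y2, β * t + α * y2)) α β y1 (hcurve1 y1 y2)).const_mul
              (α : ℂ)).add
          ((lineDgen (fun z => fderiv ℝ f z ((0:ℝ), (1:ℝ))) hF2d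
            (fun t => (α * t - β * y2, β * t + α * y2)) α β y1 (hcurve1 y1 y2)).const_mul
              (β : ℂ))))
    change deriv (fun t => pd1 g (t, y2)) y1 = _
    rw [hfun]
    exact hD.deriv
  have G22 : ∀ y1 y2 : ℝ, pd2 (pd2 g) (y1, y2) =
      (Complex.exp (-Complex.I * ((S (y1, y2) : ℝ) : ℂ) / (h : ℂ))
          * (-Complex.I * ((α * β * y2 + β ^ 2 * y1 : ℝ) : ℂ) / (h : ℂ))
          * (-Complex.I * ((α * β * y2 + β ^ 2 * y1 : ℝ) : ℂ) / (h : ℂ))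
        + Complex.exp (-Complex.I * ((S (y1, y2) : ℝ) : ℂ) / (h : ℂ))
          * (-Complex.I * ((α * β : ℝ) : ℂ) / (h : ℂ)))
        * f (α * y1 - β * y2, β * y1 + α * y2)
      + Complex.exp (-Complex.I * ((S (y1, y2) : ℝ) : ℂ) / (h : ℂ))
          * (-Complex.I * ((α * β * y2 + β ^ 2 * y1 : ℝ) : ℂ) / (h : ℂ))
          * (((-β : ℝ) : ℂ) * fderiv ℝ f (α * y1 - β * y2, β * y1 + α * y2) ((1:ℝ), (0:ℝ))
            + (α : ℂ) * fderiv ℝ f (α * y1 - β * y2, β * y1 + α * y2) ((0:ℝ), (1:ℝ)))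
      + (Complex.exp (-Complex.I * ((S (y1, y2) : ℝ) : ℂ) / (h : ℂ))
          * (-Complex.I * ((α * β * y2 + β ^ 2 * y1 : ℝ) : ℂ) / (h : ℂ))
          * (((-β : ℝ) : ℂ) * fderiv ℝ f (α * y1 - β * y2, β * y1 + α * y2) ((1:ℝ), (0:ℝ))
            + (α : ℂ) * fderiv ℝ f (α * y1 - β * y2, β * y1 + α * y2) ((0:ℝ), (1:ℝ)))
        + Complex.exp (-Complex.I * ((S (y1, y2) : ℝ) : ℂ) / (h : ℂ))
          * (((-β : ℝ) : ℂ) * (((-β : ℝ) : ℂ) * fderiv ℝ (fun z => fderiv ℝ f z ((1:ℝ), (0:ℝ)))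
                (α * y1 - β * y2, β * y1 + α * y2) ((1:ℝ), (0:ℝ))
              + (α : ℂ) * fderiv ℝ (fun z => fderiv ℝ f z ((1:ℝ), (0:ℝ)))
                (α * y1 - β * y2, β * y1 + α * y2) ((0:ℝ), (1:ℝ)))
            + (α : ℂ) * (((-β : ℝ) : ℂ) * fderiv ℝ (fun z => fderiv ℝ f z ((0:ℝ), (1:ℝ)))
                (α * y1 - β * y2, β * y1 + α * y2) ((1:ℝ), (0:ℝ))
              + (α : ℂ) * fderiv ℝ (fun z => fderiv ℝ f z ((0:ℝ), (1:ℝ)))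
                (α * y1 - β * y2, β * y1 + α * y2) ((0:ℝ), (1:ℝ))))) := by
    intro y1 y2
    have hfun : (fun t => pd2 g (y1, t)) = fun t =>
        Complex.exp (-Complex.I * ((S (y1, t) : ℝ) : ℂ) / (h : ℂ))
          * (-Complex.I * ((α * β * t + β ^ 2 * y1 : ℝ) : ℂ) / (h : ℂ))
          * f (α * y1 - β * t, β * y1 + α * t)
        + Complex.exp (-Complex.I * ((S (y1, t) : ℝ) : ℂ) / (h : ℂ))
          * (((-β : ℝ) : ℂ) * fderiv ℝ f (α * y1 - β * t, β * y1 + α * t) ((1:ℝ), (0:ℝ))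
            + (α : ℂ) * fderiv ℝ f (α * y1 - β * t, β * y1 + α * t) ((0:ℝ), (1:ℝ))) :=
      funext fun t => G2 y1 t
    have hC2t : HasDerivAt
        (fun t => -Complex.I * ((α * β * t + β ^ 2 * y1 : ℝ) : ℂ) / (h : ℂ))
        (-Complex.I * ((α * β : ℝ) : ℂ) / (h : ℂ)) y2 := by
      have hlin : HasDerivAt (fun t : ℝ => α * β * t + β ^ 2 * y1) (α * β) y2 := by
        rw [show (fun t : ℝ => α * β * t + β ^ 2 * y1)
            = fun t : ℝ => 0 * t ^ 2 + (α * β) * t + β ^ 2 * y1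
            from funext fun t => by ring]
        have := quadDeriv 0 (α * β) (β ^ 2 * y1) y2
        convert this using 1; ring
      exact (hlin.ofReal_comp.const_mul (-Complex.I)).div_const (h : ℂ)
    have hD := (((hphase2 y1 y2).mul hC2t).mul
        (lineDgen f hfd (fun t => (α * y1 - β * t, β * y1 + α * t)) (-β) α y2 (hcurve2 y1 y2))).add
      ((hphase2 y1 y2).mul
        (((lineDgen (fun z => fderiv ℝ f z ((1:ℝ), (0:ℝ))) hF1d
            (fun t => (α * y1 - β * t, β * y1 + α * t)) (-β) α y2 (hcurve2 y1 y2)).const_mul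
              ((-β : ℝ) : ℂ)).add
          ((lineDgen (fun z => fderiv ℝ f z ((0:ℝ), (1:ℝ))) hF2d
            (fun t => (α * y1 - β * t, β * y1 + α * t)) (-β) α y2 (hcurve2 y1 y2)).const_mul
              (α : ℂ))))
    change deriv (fun t => pd2 g (y1, t)) y2 = _
    rw [hfun]
    exact hD.deriv
  -- rewrite the right-hand side partial derivatives of f
  have hp1fun : pd1 f = fun z => fderiv ℝ f z ((1:ℝ), (0:ℝ)) := funext (pd1_fderiv f hfd)
  have hp2fun : pd2 f = fun z => fderiv ℝ f z ((0:ℝ), (1:ℝ)) := funext (pd2_fderiv f hfd)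
  have hp11 : ∀ x, pd1 (fun z => fderiv ℝ f z ((1:ℝ), (0:ℝ))) x
      = fderiv ℝ (fun z => fderiv ℝ f z ((1:ℝ), (0:ℝ))) x ((1:ℝ), (0:ℝ)) :=
    pd1_fderiv _ hF1d
  have hp22 : ∀ x, pd2 (fun z => fderiv ℝ f z ((0:ℝ), (1:ℝ))) x
      = fderiv ℝ (fun z => fderiv ℝ f z ((0:ℝ), (1:ℝ))) x ((0:ℝ), (1:ℝ)) :=
    pd2_fderiv _ hF2d
  have hA : (α : ℂ) ^ 2 + (β : ℂ) ^ 2 = 1 := by exact_mod_cast hαβ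
  intro y
  obtain ⟨y1, y2⟩ := y
  simp only [Hop, hg, hw, hAinv, G1, G2, G11, G22, hp1fun, hp2fun, hp11, hp22]
  push_cast
  set E := Complex.exp (-Complex.I * ((S (y1, y2) : ℝ) : ℂ) / (h : ℂ)) with hE
  set u := f (α * y1 - β * y2, β * y1 + α * y2) with hu
  set U1 := fderiv ℝ f (α * y1 - β * y2, β * y1 + α * y2) ((1:ℝ), (0:ℝ)) with hU1
  set U2 := fderiv ℝ f (α * y1 - β * y2, β * y1 + α * y2) ((0:ℝ), (1:ℝ)) with hU2
  set U11 := fderiv ℝ (fun z => fderiv ℝ f z ((1:ℝ), (0:ℝ)))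
      (α * y1 - β * y2, β * y1 + α * y2) ((1:ℝ), (0:ℝ)) with hU11
  set U22 := fderiv ℝ (fun z => fderiv ℝ f z ((0:ℝ), (1:ℝ)))
      (α * y1 - β * y2, β * y1 + α * y2) ((0:ℝ), (1:ℝ)) with hU22
  linear_combination
    ((1:ℂ) * E * u * (h:ℂ) * ((h:ℂ))⁻¹ * (β:ℂ)^2 * (y2:ℂ)^2 + (-1:ℂ) * E * u * (h:ℂ) * ((h:ℂ))⁻¹ * (α:ℂ) * (β:ℂ) * (y1:ℂ) * (y2:ℂ) + (-1/2:ℂ) * E * u * (h:ℂ)^2 * ((h:ℂ)⁻¹)^2 * (β:ℂ)^4 * (y2:ℂ)^2 + (-1/2:ℂ) * E * u * (h:ℂ)^2 * ((h:ℂ)⁻¹)^2 * (β:ℂ)^4 * (y1:ℂ)^2 + (-1/2:ℂ) * E * u * (h:ℂ)^2 * ((h:ℂ)⁻¹)^2 * (α:ℂ)^2 * (β:ℂ)^2 * (y2:ℂ)^2 + (-1/2:ℂ) * E * u * (h:ℂ)^2 * ((h:ℂ)⁻¹)^2 * (α:ℂ)^2 * (β:ℂ)^2 * (y1:ℂ)^2)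 * Complex.I_sq
    + ((1:ℂ) * E * U2 * Complex.I * (h:ℂ) * (β:ℂ)^3 * (y2:ℂ) + (1:ℂ) * E * U2 * Complex.I * (h:ℂ) * (α:ℂ)^2 * (β:ℂ) * (y2:ℂ) + (-1:ℂ) * E * U1 * Complex.I * (h:ℂ) * (β:ℂ)^3 * (y1:ℂ) + (-1:ℂ) * E * U1 * Complex.I * (h:ℂ) * (α:ℂ)^2 * (β:ℂ) * (y1:ℂ) + (-1:ℂ) * E * u * (β:ℂ)^2 * (y2:ℂ)^2 + (1/2:ℂ) * E * u * (β:ℂ)^4 * (y2:ℂ)^2 + (1/2:ℂ) * E * u * (β:ℂ)^4 * (y1:ℂ)^2 + (1:ℂ) * E * u * (α:ℂ) * (β:ℂ) * (y1:ℂ) * (y2:ℂ) + (1/2:ℂ) * E * u * (α:ℂ)^2 * (β:ℂ)^2 * (y2:ℂ)^2 + (1/2:ℂ) * E * u * (α:ℂ)^2 * (β:ℂ)^2 * (y1:ℂ)^2 + (1/2:ℂ) * E * u * (h:ℂ) * ((h:ℂ))⁻¹ * (β:ℂ)^4 * (y2:ℂ)^2 + (1/2:ℂ) * E * u * (h:ℂ)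 * ((h:ℂ))⁻¹ * (β:ℂ)^4 * (y1:ℂ)^2 + (1/2:ℂ) * E * u * (h:ℂ) * ((h:ℂ))⁻¹ * (α:ℂ)^2 * (β:ℂ)^2 * (y2:ℂ)^2 + (1/2:ℂ) * E * u * (h:ℂ) * ((h:ℂ))⁻¹ * (α:ℂ)^2 * (β:ℂ)^2 * (y1:ℂ)^2) * (mul_inv_cancel₀ hne)
    + ((-1/2:ℂ) * E * U22 * (h:ℂ)^2 + (-1/2:ℂ) * E * U11 * (h:ℂ)^2 + (1:ℂ) * E * U2 * Complex.I * (h:ℂ) * (β:ℂ) * (y2:ℂ) + (-1:ℂ) * E * U1 * Complex.I * (h:ℂ) * (β:ℂ) * (y1:ℂ) + (-1/2:ℂ) * E * u * (y2:ℂ)^2 + (1/2:ℂ) * E * u * (β:ℂ)^2 * (y2:ℂ)^2 + (1/2:ℂ) * E * u * (β:ℂ)^2 * (y1:ℂ)^2) * hA
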